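/- Let B ⊆ P be a principal coalgebra C-extension, π: C → D a coalgebra map, e the copointing group-like, ē = π(e), A = P^{co D}_ē, and X = C^{co D}_ē. Then the canonical Galois map restricts to an isomorphism of left P-modules P ⊗_B A ≅ P ⊗ X. -/

import Mathlib

open TensorProduct

variable (k C D P : Type) [Field k] [AddCommGroup C] [Module k C] [Coalgebra k C]
  [AddCommGroup D] [Module k D] [Coalgebra k D]
  [Ring P] [Algebra k P]

/-- The canonical Galois map `P ⊗ P → P ⊗ C`, `p ⊗ q ↦ p·ρ(q)`. -/
noncomputable def canMap (ρ : P →ₗ[k] P ⊗[k] C) : P ⊗[k] P →ₗ[k] P ⊗[k] C :=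
  LinearMap.rTensor C (LinearMap.mul' k P) ∘ₗ
    (TensorProduct.assoc k P P C).symm.toLinearMap ∘ₗ LinearMap.lTensor P ρ

/-- The coinvariants `B = P^{co C}`. -/
def coinv (ρ : P →ₗ[k] P ⊗[k] C) : Set P :=
  {b : P | ∀ p : P, ρ (b * p) = LinearMap.rTensor C (LinearMap.mulLeft k b) (ρ p)}

/-- The kernel of `P ⊗ₖ P → P ⊗_B P`. -/
def galRel (ρ : P →ₗ[k] P ⊗[k] C) : Submodule k (P ⊗[k] P) :=
  Submodule.span k
    {w : P ⊗[k] P | ∃ p q b : P, b ∈ coinv k C P ρ ∧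
      w = (p * b) ⊗ₜ[k] q - p ⊗ₜ[k] (b * q)}

/-- The `ē`-coinvariants `X ⊆ C`. -/
noncomputable def Xsub (π : C →ₗ[k] D) (eb : D) : Submodule k C :=
  LinearMap.ker
    ((LinearMap.lTensor C π ∘ₗ Coalgebra.comul (R := k) (A := C)) -
      (TensorProduct.mk k C D).flip eb)

/-- The `ē`-coinvariants `A ⊆ P`. -/
noncomputable def Asub (ρ : P →ₗ[k] P ⊗[k] C) (π : C →ₗ[k] D) (eb : D) :
    Submodule k P :=
  LinearMap.ker ((LinearMap.lTensor P π ∘ₗ ρ) - (TensorProduct.mk k P D).flip eb)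

/-- The kernel of `P ⊗ₖ A → P ⊗_B A`. -/
noncomputable def galRelA (ρ : P →ₗ[k] P ⊗[k] C) (π : C →ₗ[k] D) (eb : D) :
    Submodule k (P ⊗[k] P) :=
  Submodule.span k
    {w : P ⊗[k] P | ∃ p : P, ∃ b ∈ coinv k C P ρ, ∃ a ∈ Asub k C D P ρ π eb,
      w = (p * b) ⊗ₜ[k] a - p ⊗ₜ[k] (b * a)}

section Stmt7Aux
set_option linter.unusedSectionVars false

private lemma aux_mulred {M : Type} [AddCommGroup M] [Module k M] (p : P) (z : P ⊗[k] M) :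
    LinearMap.rTensor M (LinearMap.mul' k P) ((TensorProduct.assoc k P P M).symm (p ⊗ₜ[k] z)) =
      LinearMap.rTensor M (LinearMap.mulLeft k p) z := by
  induction z using TensorProduct.induction_on with
  | zero => simp
  | tmul q m => simp [LinearMap.mul'_apply]
  | add x y hx hy => simp only [tmul_add, map_add, hx, hy]

private lemma canMap_tmul (ρ : P →ₗ[k] P ⊗[k] C) (p q : P) :
    canMap k C P ρ (p ⊗ₜ[k] q) = LinearMap.rTensor C (LinearMap.mulLeft k p) (ρ q) := by
  simp only [canMap, LinearMap.coe_comp, Function.comp_apply, LinearEquiv.coe_coe,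
    LinearMap.lTensor_tmul]
  exact aux_mulred k P p (ρ q)

private noncomputable def theta (σ : P →ₗ[k] P ⊗[k] P) : P ⊗[k] P →ₗ[k] P ⊗[k] P :=
  LinearMap.rTensor P (LinearMap.mul' k P) ∘ₗ
    (TensorProduct.assoc k P P P).symm.toLinearMap ∘ₗ LinearMap.lTensor P σ

private lemma theta_tmul (σ : P →ₗ[k] P ⊗[k] P) (p q : P) :
    theta k P σ (p ⊗ₜ[k] q) = LinearMap.rTensor P (LinearMap.mulLeft k p) (σ q) := by
  simp only [theta, LinearMap.coe_comp, Function.comp_apply, LinearEquiv.coe_coe,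
    LinearMap.lTensor_tmul]
  exact aux_mulred k P p (σ q)

private lemma map_comm {M M' N N' : Type} [AddCommGroup M] [Module k M] [AddCommGroup M']
    [Module k M'] [AddCommGroup N] [Module k N] [AddCommGroup N'] [Module k N']
    (f : M →ₗ[k] M') (g : N →ₗ[k] N') (z : M ⊗[k] N) :
    LinearMap.lTensor M' g (LinearMap.rTensor N f z) =
      LinearMap.rTensor N' f (LinearMap.lTensor M g z) := by
  rw [← LinearMap.comp_apply, ← LinearMap.comp_apply, LinearMap.lTensor_comp_rTensor,
    LinearMap.rTensor_comp_lTensor]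

private lemma assoc_nat {M N Q Q' : Type} [AddCommGroup M] [Module k M] [AddCommGroup N]
    [Module k N] [AddCommGroup Q] [Module k Q] [AddCommGroup Q'] [Module k Q']
    (f : Q →ₗ[k] Q') (u : (M ⊗[k] N) ⊗[k] Q) :
    TensorProduct.assoc k M N Q' (LinearMap.lTensor (M ⊗[k] N) f u) =
      LinearMap.lTensor M (LinearMap.lTensor N f) (TensorProduct.assoc k M N Q u) := by
  induction u using TensorProduct.induction_on with
  | zero => simp
  | tmul z q =>
    induction z using TensorProduct.induction_on with
    | zero => simp
    | tmul m n => simp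
    | add x y hx hy => simp only [add_tmul, map_add, hx, hy]
  | add x y hx hy => simp only [map_add, hx, hy]

private lemma lTensor_flip_mk {M : Type} [AddCommGroup M] [Module k M] (eb : D) (z : P ⊗[k] M) :
    LinearMap.lTensor P ((TensorProduct.mk k M D).flip eb) z =
      TensorProduct.assoc k P M D (z ⊗ₜ[k] eb) := by
  induction z using TensorProduct.induction_on with
  | zero => simp
  | tmul p m => simp
  | add x y hx hy => simp only [add_tmul, map_add, hx, hy]

private lemma assoc_symm_rT {M M' N E : Type} [AddCommGroup M] [Module k M] [AddCommGroup M']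
    [Module k M'] [AddCommGroup N] [Module k N] [AddCommGroup E] [Module k E]
    (f : M →ₗ[k] M') (m : M) (y : N ⊗[k] E) :
    (TensorProduct.assoc k M' N E).symm (f m ⊗ₜ[k] y) =
      LinearMap.rTensor E (LinearMap.rTensor N f)
        ((TensorProduct.assoc k M N E).symm (m ⊗ₜ[k] y)) := by
  induction y using TensorProduct.induction_on with
  | zero => simp
  | tmul n e => simp
  | add x y hx hy => simp only [tmul_add, map_add, hx, hy]

private lemma auxS1 {M M' : Type} [AddCommGroup M] [Module k M] [AddCommGroup M'] [Module k M']
    (g : P ⊗[k] P →ₗ[k] P ⊗[k] M') (f : P →ₗ[k] P ⊗[k] M')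
    (h : ∀ p v : P, g (p ⊗ₜ[k] v) = LinearMap.rTensor M' (LinearMap.mulLeft k p) (f v))
    (p : P) (y : P ⊗[k] M) :
    LinearMap.rTensor M g ((TensorProduct.assoc k P P M).symm (p ⊗ₜ[k] y)) =
      LinearMap.rTensor M (LinearMap.rTensor M' (LinearMap.mulLeft k p))
        (LinearMap.rTensor M f y) := by
  induction y using TensorProduct.induction_on with
  | zero => simp
  | tmul v m => simp [h]
  | add x y hx hy => simp only [tmul_add, map_add, hx, hy]

private lemma auxS2 {M N E : Type} [AddCommGroup M] [Module k M] [AddCommGroup N] [Module k N]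
    [AddCommGroup E] [Module k E] (h : M →ₗ[k] N ⊗[k] E) (p : P) (z : P ⊗[k] M) :
    (TensorProduct.assoc k P N E).symm
        (LinearMap.lTensor P h (LinearMap.rTensor M (LinearMap.mulLeft k p) z)) =
      LinearMap.rTensor E (LinearMap.rTensor N (LinearMap.mulLeft k p))
        ((TensorProduct.assoc k P N E).symm (LinearMap.lTensor P h z)) := by
  induction z using TensorProduct.induction_on with
  | zero => simp
  | tmul u m =>
    simp only [LinearMap.rTensor_tmul, LinearMap.lTensor_tmul, LinearMap.mulLeft_apply]
    simpa using assoc_symm_rT k (LinearMap.mulLeft k p) u (h m)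
  | add x y hx hy => simp only [map_add, hx, hy]

private lemma key1 (ρ : P →ₗ[k] P ⊗[k] C) (π : C →ₗ[k] D) (eb : D)
    (σ : P →ₗ[k] P ⊗[k] P)
    (hσcolin : ∀ p : P, LinearMap.rTensor C σ (ρ p) =
      (TensorProduct.assoc k P P C).symm (LinearMap.lTensor P ρ (σ p)))
    (q : P) :
    (TensorProduct.assoc k P P D).symm
        (LinearMap.lTensor P
          ((LinearMap.lTensor P π ∘ₗ ρ) - (TensorProduct.mk k P D).flip eb) (σ q)) =
      LinearMap.rTensor D σ
        (((LinearMap.lTensor P π ∘ₗ ρ) - (TensorProduct.mk k P D).flip eb) q) := by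
  rw [LinearMap.lTensor_sub, LinearMap.sub_apply, map_sub, LinearMap.sub_apply, map_sub]
  congr 1
  · rw [LinearMap.lTensor_comp, LinearMap.comp_apply]
    have h1 : LinearMap.lTensor P ρ (σ q) =
        TensorProduct.assoc k P P C (LinearMap.rTensor C σ (ρ q)) := by
      rw [hσcolin q, LinearEquiv.apply_symm_apply]
    rw [h1, ← assoc_nat, LinearEquiv.symm_apply_apply, LinearMap.comp_apply]
    exact map_comm k σ π (ρ q)
  · rw [lTensor_flip_mk, LinearEquiv.symm_apply_apply, LinearMap.flip_apply,
      TensorProduct.mk_apply, LinearMap.rTensor_tmul]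

private lemma key2 (ρ : P →ₗ[k] P ⊗[k] C)
    (hρcoassoc : ∀ p : P,
      TensorProduct.assoc k P C C (LinearMap.rTensor C ρ (ρ p)) =
        LinearMap.lTensor P (Coalgebra.comul (R := k) (A := C)) (ρ p))
    (π : C →ₗ[k] D) (eb : D) (q : P) :
    (TensorProduct.assoc k P C D).symm
        (LinearMap.lTensor P
          ((LinearMap.lTensor C π ∘ₗ Coalgebra.comul (R := k) (A := C)) -
            (TensorProduct.mk k C D).flip eb) (ρ q)) =
      LinearMap.rTensor D ρ
        (((LinearMap.lTensor P π ∘ₗ ρ) - (TensorProduct.mk k P D).flip eb) q) := by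
  rw [LinearMap.lTensor_sub, LinearMap.sub_apply, map_sub, LinearMap.sub_apply, map_sub]
  congr 1
  · rw [LinearMap.lTensor_comp, LinearMap.comp_apply]
    have h1 : LinearMap.lTensor P (Coalgebra.comul (R := k) (A := C)) (ρ q) =
        TensorProduct.assoc k P C C (LinearMap.rTensor C ρ (ρ q)) := (hρcoassoc q).symm
    rw [h1, ← assoc_nat, LinearEquiv.symm_apply_apply, LinearMap.comp_apply]
    exact map_comm k ρ π (ρ q)
  · rw [lTensor_flip_mk, LinearEquiv.symm_apply_apply, LinearMap.flip_apply,
      TensorProduct.mk_apply, LinearMap.rTensor_tmul]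

end Stmt7Aux

/-- for a principal coalgebra `C`-extension `B ⊆ P`, a coalgebra map
`π : C → D` and `A = P^{co D}_ē`, `X = C^{co D}_ē`, the canonical Galois map restricts
to an isomorphism of left `P`-modules `P ⊗_B A ≅ P ⊗ X`. -/
theorem stmt7
    (ρ : P →ₗ[k] P ⊗[k] C)
    (hρcounit : ∀ p : P,
      TensorProduct.rid k P
        (LinearMap.lTensor P (Coalgebra.counit (R := k) (A := C)) (ρ p)) = p)
    (hρcoassoc : ∀ p : P,
      TensorProduct.assoc k P C C (LinearMap.rTensor C ρ (ρ p)) =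
        LinearMap.lTensor P (Coalgebra.comul (R := k) (A := C)) (ρ p))
    (e : C) (he_counit : Coalgebra.counit (R := k) e = 1)
    (he_comul : Coalgebra.comul (R := k) e = e ⊗ₜ[k] e)
    (h1 : ρ 1 = 1 ⊗ₜ[k] e)
    -- the extension is Galois
    (hsurj : Function.Surjective (canMap k C P ρ))
    (hker : LinearMap.ker (canMap k C P ρ) = galRel k C P ρ)
    -- the canonical entwining map is bijective
    (ψ : C ⊗[k] P ≃ₗ[k] P ⊗[k] C)
    (hent : ∀ q p : P,
      ρ (q * p) =
        LinearMap.rTensor C (LinearMap.mul' k P)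
          ((TensorProduct.assoc k P P C).symm
            (LinearMap.lTensor P ψ.toLinearMap
              (TensorProduct.assoc k P C P ((ρ q) ⊗ₜ[k] p)))))
    -- `P` is `C`-equivariantly projective as a left `B`-module
    (hproj : ∃ σ : P →ₗ[k] P ⊗[k] P,
      (∀ p : P, LinearMap.mul' k P (σ p) = p) ∧
      (∀ p : P, σ p ∈
        Submodule.span k {w : P ⊗[k] P | ∃ b ∈ coinv k C P ρ, ∃ q : P, w = b ⊗ₜ[k] q}) ∧
      (∀ b ∈ coinv k C P ρ, ∀ p : P,
        σ (b * p) = LinearMap.rTensor P (LinearMap.mulLeft k b) (σ p)) ∧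
      (∀ p : P,
        LinearMap.rTensor C σ (ρ p) =
          (TensorProduct.assoc k P P C).symm (LinearMap.lTensor P ρ (σ p))))
    (π : C →ₗ[k] D)
    (hπΔ : ∀ c : C,
      Coalgebra.comul (R := k) (π c) = TensorProduct.map π π (Coalgebra.comul c))
    (hπε : ∀ c : C,
      Coalgebra.counit (R := k) (π c) = Coalgebra.counit (R := k) c) :
    -- the Galois map is left `P`-linear
    (∀ (r : P) (w : P ⊗[k] P),
      canMap k C P ρ (LinearMap.rTensor P (LinearMap.mulLeft k r) w) =
        LinearMap.rTensor C (LinearMap.mulLeft k r) (canMap k C P ρ w)) ∧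
    -- it maps `P ⊗ₖ A` onto `P ⊗ X` ...
    Submodule.map (canMap k C P ρ)
        (LinearMap.range (LinearMap.lTensor P (Asub k C D P ρ π (π e)).subtype)) =
      LinearMap.range (LinearMap.lTensor P (Xsub k C D π (π e)).subtype) ∧
    -- ... with kernel exactly the kernel of `P ⊗ₖ A → P ⊗_B A`
    (∀ w ∈ LinearMap.range (LinearMap.lTensor P (Asub k C D P ρ π (π e)).subtype),
      (canMap k C P ρ w = 0 ↔ w ∈ galRelA k C D P ρ π (π e))) := by
  clear hρcounit he_counit he_comul h1 hent hπΔ hπε ψ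
  obtain ⟨σ, hσmul, hσspan, hσB, hσcolin⟩ := hproj
  -- notation
  set ρt : P →ₗ[k] P ⊗[k] D :=
    (LinearMap.lTensor P π ∘ₗ ρ) - (TensorProduct.mk k P D).flip (π e) with hρt
  set Δt : C →ₗ[k] C ⊗[k] D :=
    (LinearMap.lTensor C π ∘ₗ Coalgebra.comul (R := k) (A := C)) -
      (TensorProduct.mk k C D).flip (π e) with hΔt
  have hAker : Asub k C D P ρ π (π e) = LinearMap.ker ρt := rfl
  have hXker : Xsub k C D π (π e) = LinearMap.ker Δt := rfl
  have key1' : ∀ q : P,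
      (TensorProduct.assoc k P P D).symm (LinearMap.lTensor P ρt (σ q)) =
        LinearMap.rTensor D σ (ρt q) := by
    intro q
    rw [hρt]
    exact key1 k C D P ρ π (π e) σ hσcolin q
  have key2' : ∀ q : P,
      (TensorProduct.assoc k P C D).symm (LinearMap.lTensor P Δt (ρ q)) =
        LinearMap.rTensor D ρ (ρt q) := by
    intro q
    rw [hΔt, hρt]
    exact key2 k C D P ρ hρcoassoc π (π e) q
  -- Part 1 : left `P`-linearity of the Galois map
  have part1 : ∀ (r : P) (w : P ⊗[k] P),
      canMap k C P ρ (LinearMap.rTensor P (LinearMap.mulLeft k r) w) =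
        LinearMap.rTensor C (LinearMap.mulLeft k r) (canMap k C P ρ w) := by
    intro r w
    induction w using TensorProduct.induction_on with
    | zero => simp
    | tmul p q =>
      rw [LinearMap.rTensor_tmul, LinearMap.mulLeft_apply, canMap_tmul, canMap_tmul,
        LinearMap.mulLeft_mul, LinearMap.rTensor_comp, LinearMap.comp_apply]
    | add x y hx hy => simp only [map_add, hx, hy]
  -- the map `Θ`
  have hcanσ : ∀ q : P, canMap k C P ρ (σ q) = ρ q := by
    intro q
    have h0 : canMap k C P ρ (σ q) = LinearMap.rTensor C (LinearMap.mul' k P)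
        ((TensorProduct.assoc k P P C).symm (LinearMap.lTensor P ρ (σ q))) := rfl
    rw [h0, ← hσcolin q, ← LinearMap.comp_apply, ← LinearMap.rTensor_comp]
    have h1 : (LinearMap.mul' k P) ∘ₗ σ = LinearMap.id := LinearMap.ext hσmul
    rw [h1, LinearMap.rTensor_id, LinearMap.id_apply]
  have hcanθ : ∀ w : P ⊗[k] P, canMap k C P ρ (theta k P σ w) = canMap k C P ρ w := by
    intro w
    induction w using TensorProduct.induction_on with
    | zero => simp
    | tmul p q => rw [theta_tmul, part1 p (σ q), hcanσ, canMap_tmul]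
    | add x y hx hy => simp only [map_add, hx, hy]
  have hθrel : ∀ w ∈ galRel k C P ρ, theta k P σ w = 0 := by
    intro w hw
    induction hw using Submodule.span_induction with
    | mem x hx =>
      obtain ⟨p, q, b, hb, rfl⟩ := hx
      have h0 : LinearMap.rTensor P (LinearMap.mulLeft k p)
          (LinearMap.rTensor P (LinearMap.mulLeft k b) (σ q)) =
          LinearMap.rTensor P (LinearMap.mulLeft k (p * b)) (σ q) := by
        rw [LinearMap.mulLeft_mul, LinearMap.rTensor_comp, LinearMap.comp_apply]
      rw [map_sub, theta_tmul, theta_tmul, hσB b hb q, h0, sub_self]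
    | zero => simp
    | add x y _ _ hx hy => rw [map_add, hx, hy, add_zero]
    | smul c x _ hx => rw [map_smul, hx, smul_zero]
  -- flatness consequences
  have hPA : LinearMap.range (LinearMap.lTensor P (Asub k C D P ρ π (π e)).subtype) =
      LinearMap.ker (LinearMap.lTensor P ρt) :=
    ((Module.Flat.lTensor_exact P (LinearMap.exact_subtype_ker_map ρt)).linearMap_ker_eq).symm
  have hPX : LinearMap.range (LinearMap.lTensor P (Xsub k C D π (π e)).subtype) =
      LinearMap.ker (LinearMap.lTensor P Δt) :=
    ((Module.Flat.lTensor_exact P (LinearMap.exact_subtype_ker_map Δt)).linearMap_ker_eq).symm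
  have hkerD : LinearMap.ker (LinearMap.rTensor D (canMap k C P ρ)) =
      LinearMap.range (LinearMap.rTensor D (galRel k C P ρ).subtype) :=
    (Module.Flat.rTensor_exact D (LinearMap.exact_iff.mpr
      (by rw [hker, Submodule.range_subtype]))).linearMap_ker_eq
  have hθkillD : ∀ u ∈ LinearMap.range (LinearMap.rTensor D (galRel k C P ρ).subtype),
      LinearMap.rTensor D (theta k P σ) u = 0 := by
    rintro _ ⟨u', rfl⟩
    rw [← LinearMap.comp_apply, ← LinearMap.rTensor_comp]
    have h0 : theta k P σ ∘ₗ (galRel k C P ρ).subtype = 0 :=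
      LinearMap.ext fun x => hθrel x x.2
    rw [h0, LinearMap.rTensor_zero, LinearMap.zero_apply]
  -- colinearity of `can` and of `Θ`
  have hcolin : ∀ w : P ⊗[k] P,
      (TensorProduct.assoc k P C D).symm (LinearMap.lTensor P Δt (canMap k C P ρ w)) =
        LinearMap.rTensor D (canMap k C P ρ)
          ((TensorProduct.assoc k P P D).symm (LinearMap.lTensor P ρt w)) := by
    intro w
    induction w using TensorProduct.induction_on with
    | zero => simp
    | tmul p q =>
      rw [canMap_tmul, auxS2 k P Δt p (ρ q), key2' q, LinearMap.lTensor_tmul,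
        auxS1 k P (canMap k C P ρ) ρ (canMap_tmul k C P ρ) p (ρt q)]
    | add x y hx hy => simp only [map_add, hx, hy]
  have hG2θ : ∀ w : P ⊗[k] P,
      (TensorProduct.assoc k P P D).symm (LinearMap.lTensor P ρt (theta k P σ w)) =
        LinearMap.rTensor D (theta k P σ)
          ((TensorProduct.assoc k P P D).symm (LinearMap.lTensor P ρt w)) := by
    intro w
    induction w using TensorProduct.induction_on with
    | zero => simp
    | tmul p q =>
      rw [theta_tmul, auxS2 k P ρt p (σ q), key1' q, LinearMap.lTensor_tmul,
        auxS1 k P (theta k P σ) σ (theta_tmul k P σ) p (ρt q)]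
    | add x y hx hy => simp only [map_add, hx, hy]
  -- σ maps A into span of b ⊗ a
  have hσPA : ∀ a : P, a ∈ Asub k C D P ρ π (π e) →
      σ a ∈ LinearMap.range (LinearMap.lTensor P (Asub k C D P ρ π (π e)).subtype) := by
    intro a ha
    rw [hPA, LinearMap.mem_ker]
    have h0 := key1' a
    have hρta : ρt a = 0 := ha
    rw [hρta, map_zero] at h0
    exact (LinearEquiv.map_eq_zero_iff _).mp h0
  obtain ⟨A', hA'⟩ := Submodule.exists_isCompl (Asub k C D P ρ π (π e))
  set prA : P →ₗ[k] P := (Asub k C D P ρ π (π e)).subtype ∘ₗ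
    Submodule.linearProjOfIsCompl _ A' hA' with hprA
  have hprA1 : ∀ x ∈ Asub k C D P ρ π (π e), prA x = x := by
    intro x hx
    have := Submodule.linearProjOfIsCompl_apply_left hA' ⟨x, hx⟩
    simp only [hprA, LinearMap.comp_apply, Submodule.coe_subtype]
    exact congrArg Subtype.val this
  have hprA2 : ∀ x : P, prA x ∈ Asub k C D P ρ π (π e) := fun x =>
    (Submodule.linearProjOfIsCompl _ A' hA' x).2
  have hfix : ∀ w ∈ LinearMap.range (LinearMap.lTensor P (Asub k C D P ρ π (π e)).subtype),
      LinearMap.lTensor P prA w = w := by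
    rintro _ ⟨u, rfl⟩
    induction u using TensorProduct.induction_on with
    | zero => simp
    | tmul p a =>
      rw [LinearMap.lTensor_tmul, LinearMap.lTensor_tmul, Submodule.coe_subtype,
        hprA1 a.1 a.2]
    | add x y hx hy => simp only [map_add, hx, hy]
  have hσS : ∀ a : P, a ∈ Asub k C D P ρ π (π e) →
      σ a ∈ Submodule.span k {w : P ⊗[k] P | ∃ b ∈ coinv k C P ρ,
        ∃ a' ∈ Asub k C D P ρ π (π e), w = b ⊗ₜ[k] a'} := by
    intro a ha
    have hgen : ∀ z ∈ Submodule.span k {w : P ⊗[k] P | ∃ b ∈ coinv k C P ρ,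
        ∃ q : P, w = b ⊗ₜ[k] q},
        LinearMap.lTensor P prA z ∈ Submodule.span k {w : P ⊗[k] P | ∃ b ∈ coinv k C P ρ,
          ∃ a' ∈ Asub k C D P ρ π (π e), w = b ⊗ₜ[k] a'} := by
      intro z hz
      induction hz using Submodule.span_induction with
      | mem x hx =>
        obtain ⟨b, hb, q, rfl⟩ := hx
        rw [LinearMap.lTensor_tmul]
        exact Submodule.subset_span ⟨b, hb, prA q, hprA2 q, rfl⟩
      | zero => simp
      | add x y _ _ hx hy => rw [map_add]; exact Submodule.add_mem _ hx hy
      | smul c x _ hx => rw [map_smul]; exact Submodule.smul_mem _ c hx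
    rw [← hfix (σ a) (hσPA a ha)]
    exact hgen (σ a) (hσspan a)
  -- difference lemma for Θ
  have hdiff : ∀ p : P, ∀ z ∈ Submodule.span k {w : P ⊗[k] P | ∃ b ∈ coinv k C P ρ,
      ∃ a' ∈ Asub k C D P ρ π (π e), w = b ⊗ₜ[k] a'},
      LinearMap.rTensor P (LinearMap.mulLeft k p) z - p ⊗ₜ[k] LinearMap.mul' k P z ∈
        galRelA k C D P ρ π (π e) := by
    intro p z hz
    induction hz using Submodule.span_induction with
    | mem x hx =>
      obtain ⟨b, hb, a, ha, rfl⟩ := hx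
      refine Submodule.subset_span ⟨p, b, hb, a, ha, ?_⟩
      rw [LinearMap.rTensor_tmul, LinearMap.mulLeft_apply, LinearMap.mul'_apply]
    | zero => simp
    | add x y _ _ hx hy =>
      have := Submodule.add_mem _ hx hy
      convert this using 1
      rw [map_add, map_add, tmul_add]
      abel
    | smul c x _ hx =>
      have := Submodule.smul_mem _ c hx
      convert this using 1
      rw [map_smul, map_smul, tmul_smul, smul_sub]
  have hθdiff : ∀ w ∈ LinearMap.range (LinearMap.lTensor P
      (Asub k C D P ρ π (π e)).subtype),
      theta k P σ w - w ∈ galRelA k C D P ρ π (π e) := by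
    rintro _ ⟨u, rfl⟩
    induction u using TensorProduct.induction_on with
    | zero => simpa using Submodule.zero_mem _
    | tmul p a =>
      rw [LinearMap.lTensor_tmul, Submodule.coe_subtype, theta_tmul]
      have h0 : (p : P) ⊗ₜ[k] (a : P) = p ⊗ₜ[k] LinearMap.mul' k P (σ a) := by
        rw [hσmul]
      rw [h0]
      exact hdiff p (σ a) (hσS a a.2)
    | add x y hx hy =>
      rw [map_add]
      have := Submodule.add_mem _ hx hy
      convert this using 1
      rw [map_add]
      abel
  refine ⟨part1, ?_, ?_⟩
  · -- Part 2
    refine le_antisymm ?_ ?_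
    · rintro _ ⟨w, hw, rfl⟩
      rw [hPX, LinearMap.mem_ker]
      rw [hPA] at hw
      have hw' : LinearMap.lTensor P ρt w = 0 := hw
      have h0 : (TensorProduct.assoc k P C D).symm
          (LinearMap.lTensor P Δt (canMap k C P ρ w)) = 0 := by
        rw [hcolin w, hw', map_zero, map_zero]
      exact (LinearEquiv.map_eq_zero_iff _).mp h0
    · rintro v hv
      rw [hPX] at hv
      have hv' : LinearMap.lTensor P Δt v = 0 := hv
      obtain ⟨w₀, hw₀⟩ := hsurj v
      rw [← hw₀] at hv' ⊢
      have hu : LinearMap.rTensor D (canMap k C P ρ)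
          ((TensorProduct.assoc k P P D).symm (LinearMap.lTensor P ρt w₀)) = 0 := by
        rw [← hcolin w₀, hv', map_zero]
      have hmem : (TensorProduct.assoc k P P D).symm (LinearMap.lTensor P ρt w₀) ∈
          LinearMap.range (LinearMap.rTensor D (galRel k C P ρ).subtype) := by
        rw [← hkerD]; exact LinearMap.mem_ker.mpr hu
      have h0 : (TensorProduct.assoc k P P D).symm
          (LinearMap.lTensor P ρt (theta k P σ w₀)) = 0 := by
        rw [hG2θ w₀]; exact hθkillD _ hmem
      have h1 : theta k P σ w₀ ∈ LinearMap.range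
          (LinearMap.lTensor P (Asub k C D P ρ π (π e)).subtype) := by
        rw [hPA, LinearMap.mem_ker]
        exact (LinearEquiv.map_eq_zero_iff _).mp h0
      exact Submodule.mem_map.mpr ⟨theta k P σ w₀, h1, hcanθ w₀⟩
  · -- Part 3
    intro w hw
    constructor
    · intro h0
      have hwrel : w ∈ galRel k C P ρ := by rw [← hker]; exact LinearMap.mem_ker.mpr h0
      have hθ := hθrel w hwrel
      have h1 := hθdiff w hw
      rw [hθ, zero_sub] at h1
      simpa using Submodule.neg_mem _ h1
    · intro hm
      have hsub : galRelA k C D P ρ π (π e) ≤ galRel k C P ρ := by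
        refine Submodule.span_mono ?_
        rintro x ⟨p, b, hb, a, ha, rfl⟩
        exact ⟨p, a, b, hb, rfl⟩
      have : w ∈ LinearMap.ker (canMap k C P ρ) := by rw [hker]; exact hsub hm
      exact LinearMap.mem_ker.mp this
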